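/- Let λ > 0, c > 0, t > 0, 0 < u < ct, and define p(u,t) = (e^{−λt}/c) [ −λ F(u,t) + (∂F/∂t)(u,t) + (2/λ)(∂²F/∂t²)(u,t) ], where F(u,t) = ∑_{k=0}^∞ (λ/(2c))^{2k} (c²t² − u²)^k / (k!)². Then p(u,t) = (λ/c) · (e^{−λt}/(c²t² − u²)) · ∑_{k=0}^∞ (λ/(2c))^{2k} (c²t² − u²)^k / (k!)² · [ (c²t² + u²)(1 − 1/(k+1)) + λt(c²t² − u²)/(2(k+1)) ]. -/

import Mathlib

set_option maxHeartbeats 1000000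

private lemma aux_master (x : ℝ) (hx : 0 ≤ x) :
    Summable fun k : ℕ => ((k : ℝ) + 2) ^ 2 * x ^ k / (Nat.factorial k : ℝ) ^ 2 := by
  refine Summable.of_nonneg_of_le (fun k => by positivity) (fun k => ?_)
    ((Real.summable_pow_div_factorial (4 * x)).mul_left 4)
  have hk1 : ((k : ℝ) + 1) ≤ 2 ^ k := by exact_mod_cast Nat.lt_two_pow_self
  have h2 : (0:ℝ) < 2 ^ k := by positivity
  have hfac : (1:ℝ) ≤ (Nat.factorial k : ℝ) := by exact_mod_cast k.factorial_pos
  have hsq : ((k:ℝ)+2)^2 ≤ 4 * 4 ^ k := by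
    have h4 : ((4:ℝ)) ^ k = (2^k) * (2^k) := by rw [show (4:ℝ) = 2*2 by norm_num, mul_pow]
    nlinarith [sq_nonneg ((k:ℝ) - 2^k)]
  have key : ((k:ℝ)+2)^2 * x ^ k ≤ 4 * 4 ^ k * x ^ k :=
    mul_le_mul_of_nonneg_right hsq (by positivity)
  calc ((k:ℝ)+2)^2 * x ^ k / (Nat.factorial k : ℝ)^2
      ≤ (4 * 4 ^ k * x ^ k) / (Nat.factorial k : ℝ) := by
        apply div_le_div₀ (by positivity) key (by positivity)
        calc (Nat.factorial k : ℝ) = (Nat.factorial k : ℝ) * 1 := by ring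
          _ ≤ (Nat.factorial k : ℝ) * (Nat.factorial k : ℝ) := by
              exact mul_le_mul_of_nonneg_left hfac (by positivity)
          _ = (Nat.factorial k : ℝ)^2 := by ring
    _ = 4 * ((4*x) ^ k / (Nat.factorial k : ℝ)) := by rw [mul_pow]; ring

private lemma aux_summable (A x : ℝ) (hx : 0 ≤ x) {f : ℕ → ℝ}
    (h : ∀ k, |f k| ≤ A * (((k : ℝ) + 2) ^ 2 * x ^ k / (Nat.factorial k : ℝ) ^ 2)) :
    Summable f :=
  Summable.of_norm_bounded ((aux_master x hx).mul_left A)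
    (by simpa [Real.norm_eq_abs] using h)

private lemma aux_key (q R w y A : ℝ) (k m : ℕ) (hm : m ≤ k) (hR : 1 ≤ R) (hA : 0 ≤ A)
    (hw : |w| ≤ A * ((k : ℝ) + 2) ^ 2) (hy : |y| ≤ R) :
    |q ^ k / (Nat.factorial k : ℝ) ^ 2 * (w * y ^ m)| ≤
      A * (((k : ℝ) + 2) ^ 2 * (|q| * R) ^ k / (Nat.factorial k : ℝ) ^ 2) := by
  have h0 : (0:ℝ) < (Nat.factorial k : ℝ) := by exact_mod_cast k.factorial_pos
  have hy' : |y| ^ m ≤ R ^ k :=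
    (pow_le_pow_left₀ (abs_nonneg y) hy m).trans (pow_le_pow_right₀ hR hm)
  have hwy : |w| * |y| ^ m ≤ A * ((k:ℝ)+2)^2 * R ^ k :=
    mul_le_mul hw hy' (by positivity) (by positivity)
  calc |q ^ k / (Nat.factorial k : ℝ) ^ 2 * (w * y ^ m)|
      = |q| ^ k / (Nat.factorial k : ℝ) ^ 2 * (|w| * |y| ^ m) := by
        rw [abs_mul, abs_div, abs_pow, abs_pow, abs_mul, abs_pow, Nat.abs_cast]
    _ ≤ |q| ^ k / (Nat.factorial k : ℝ) ^ 2 * (A * ((k:ℝ)+2)^2 * R ^ k) := by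
        exact mul_le_mul_of_nonneg_left hwy (by positivity)
    _ = A * (((k : ℝ) + 2) ^ 2 * (|q| * R) ^ k / (Nat.factorial k : ℝ) ^ 2) := by
        rw [mul_pow]; ring

private lemma hasDerivAt_G (q x : ℝ) :
    HasDerivAt (fun y : ℝ => ∑' k : ℕ, q ^ k / (Nat.factorial k : ℝ) ^ 2 * y ^ k)
      (∑' k : ℕ, q ^ k / (Nat.factorial k : ℝ) ^ 2 * ((k : ℝ) * x ^ (k - 1))) x := by
  have hR : 1 ≤ |x| + 1 := by linarith [abs_nonneg x]
  have hxR : |x| ≤ |x| + 1 := by linarith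
  refine hasDerivAt_tsum_of_isPreconnected
    (u := fun k : ℕ => 1 * (((k:ℝ)+2)^2 * ((|q| * (|x|+1))^k) / (Nat.factorial k : ℝ)^2))
    (g' := fun (k : ℕ) (y : ℝ) => q ^ k / (Nat.factorial k : ℝ) ^ 2 * ((k : ℝ) * y ^ (k - 1)))
    (t := Metric.ball (0:ℝ) (|x|+1)) (y₀ := x)
    ((aux_master (|q| * (|x| + 1)) (by positivity)).mul_left 1)
    Metric.isOpen_ball (convex_ball (0:ℝ) (|x|+1)).isPreconnected
    (fun k y _ => (hasDerivAt_pow k y).const_mul _)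
    (fun k y hy => ?_) ?_ ?_ ?_
  · beta_reduce
    have hy' : |y| ≤ |x| + 1 := by
      rw [Metric.mem_ball, Real.dist_eq, sub_zero] at hy; exact hy.le
    rw [Real.norm_eq_abs]
    refine aux_key q (|x|+1) _ y 1 k (k-1) (Nat.sub_le k 1) hR zero_le_one ?_ hy'
    rw [Nat.abs_cast]
    nlinarith [Nat.cast_nonneg (α := ℝ) k]
  · simpa [Metric.mem_ball, Real.dist_eq] using lt_add_one |x|
  · refine aux_summable 1 (|q| * (|x| + 1)) (by positivity) fun k => ?_
    have h : q ^ k / (Nat.factorial k : ℝ) ^ 2 * x ^ k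
        = q ^ k / (Nat.factorial k : ℝ) ^ 2 * ((1:ℝ) * x ^ k) := by ring
    rw [h]
    refine aux_key q (|x|+1) 1 x 1 k k le_rfl hR zero_le_one ?_ hxR
    rw [abs_one]; nlinarith [Nat.cast_nonneg (α := ℝ) k]
  · simpa [Metric.mem_ball, Real.dist_eq] using lt_add_one |x|

private lemma hasDerivAt_G1 (q x : ℝ) :
    HasDerivAt (fun y : ℝ => ∑' k : ℕ, q ^ k / (Nat.factorial k : ℝ) ^ 2 * ((k : ℝ) * y ^ (k - 1)))
      (∑' k : ℕ, q ^ k / (Nat.factorial k : ℝ) ^ 2 *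
        ((k : ℝ) * (((k - 1 : ℕ) : ℝ) * x ^ (k - 1 - 1)))) x := by
  have hR : 1 ≤ |x| + 1 := by linarith [abs_nonneg x]
  have hxR : |x| ≤ |x| + 1 := by linarith
  refine hasDerivAt_tsum_of_isPreconnected
    (u := fun k : ℕ => 1 * (((k:ℝ)+2)^2 * ((|q| * (|x|+1))^k) / (Nat.factorial k : ℝ)^2))
    (g' := fun (k : ℕ) (y : ℝ) => q ^ k / (Nat.factorial k : ℝ) ^ 2 *
        ((k : ℝ) * (((k - 1 : ℕ) : ℝ) * y ^ (k - 1 - 1))))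
    (t := Metric.ball (0:ℝ) (|x|+1)) (y₀ := x)
    ((aux_master (|q| * (|x| + 1)) (by positivity)).mul_left 1)
    Metric.isOpen_ball (convex_ball (0:ℝ) (|x|+1)).isPreconnected
    (fun k y _ => ?_) (fun k y hy => ?_) ?_ ?_ ?_
  · have h := (hasDerivAt_pow (k-1) y).const_mul (q ^ k / (Nat.factorial k : ℝ) ^ 2 * (k:ℝ))
    simpa [mul_assoc] using h
  · beta_reduce
    have hy' : |y| ≤ |x| + 1 := by
      rw [Metric.mem_ball, Real.dist_eq, sub_zero] at hy; exact hy.le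
    rw [Real.norm_eq_abs]
    have h : q ^ k / (Nat.factorial k : ℝ) ^ 2 * ((k : ℝ) * (((k - 1 : ℕ) : ℝ) * y ^ (k - 1 - 1)))
        = q ^ k / (Nat.factorial k : ℝ) ^ 2 * (((k : ℝ) * ((k - 1 : ℕ) : ℝ)) * y ^ (k - 1 - 1)) := by
      ring
    rw [h]
    refine aux_key q (|x|+1) _ y 1 k (k-1-1) (le_trans (Nat.sub_le _ _) (Nat.sub_le _ _)) hR
      zero_le_one ?_ hy'
    rw [abs_mul, Nat.abs_cast, Nat.abs_cast]
    have h1 : ((k - 1 : ℕ) : ℝ) ≤ (k : ℝ) := by exact_mod_cast Nat.sub_le k 1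
    have h2 : (0:ℝ) ≤ ((k - 1 : ℕ) : ℝ) := Nat.cast_nonneg _
    nlinarith [Nat.cast_nonneg (α := ℝ) k]
  · simpa [Metric.mem_ball, Real.dist_eq] using lt_add_one |x|
  · refine aux_summable 1 (|q| * (|x| + 1)) (by positivity) fun k => ?_
    refine aux_key q (|x|+1) _ x 1 k (k-1) (Nat.sub_le k 1) hR zero_le_one ?_ hxR
    rw [Nat.abs_cast]
    nlinarith [Nat.cast_nonneg (α := ℝ) k]
  · simpa [Metric.mem_ball, Real.dist_eq] using lt_add_one |x|


/-- `F(u,t) = ∑_{k=0}^∞ (λ/(2c))^{2k} (c²t² − u²)^k / (k!)²`,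
which equals `I₀((λ/c)√(c²t² − u²))` for `|u| ≤ ct`. -/
noncomputable def F (lam c u t : ℝ) : ℝ :=
  ∑' k : ℕ, (lam / (2 * c)) ^ (2 * k) * (c ^ 2 * t ^ 2 - u ^ 2) ^ k /
    ((Nat.factorial k : ℝ)) ^ 2

/-- The density of the absolutely continuous component of the planar cyclic motion:
`p(u,t) = (e^{−λt}/c)[−λF + ∂F/∂t + (2/λ)∂²F/∂t²]`. -/
noncomputable def planarDensity (lam c u t : ℝ) : ℝ :=
  Real.exp (-(lam * t)) / c *
    (-(lam * F lam c u t) + deriv (fun s => F lam c u s) t +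
      2 / lam * iteratedDeriv 2 (fun s => F lam c u s) t)

theorem planarDensity_series_form
    (lam c t u : ℝ) (hlam : 0 < lam) (hc : 0 < c) (ht : 0 < t)
    (hu0 : 0 < u) (huct : u < c * t) :
    planarDensity lam c u t =
      lam / c * (Real.exp (-(lam * t)) / (c ^ 2 * t ^ 2 - u ^ 2)) *
        ∑' k : ℕ, (lam / (2 * c)) ^ (2 * k) * (c ^ 2 * t ^ 2 - u ^ 2) ^ k /
          ((Nat.factorial k : ℝ)) ^ 2 *
          ((c ^ 2 * t ^ 2 + u ^ 2) * (1 - 1 / ((k : ℝ) + 1)) +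
            lam * t * (c ^ 2 * t ^ 2 - u ^ 2) / (2 * ((k : ℝ) + 1))) := by
  have hc0 : c ≠ 0 := ne_of_gt hc
  have hlam0 : lam ≠ 0 := ne_of_gt hlam
  have hz : 0 < c ^ 2 * t ^ 2 - u ^ 2 := by
    nlinarith [mul_pos (sub_pos.2 huct) (by positivity : (0:ℝ) < c * t + u)]
  set q : ℝ := (lam / (2 * c)) ^ 2 with hq
  set z : ℝ := c ^ 2 * t ^ 2 - u ^ 2 with hzdef
  clear_value q z
  have hzne : z ≠ 0 := ne_of_gt hz
  have habsz : |z| ≤ |z| + 1 := by linarith [abs_nonneg z]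
  have hRz : (1:ℝ) ≤ |z| + 1 := by linarith [abs_nonneg z]
  -- F as a clean power series
  have hFfun : (fun s => F lam c u s)
      = fun s : ℝ => ∑' k : ℕ, q ^ k / (Nat.factorial k : ℝ) ^ 2 * (c ^ 2 * s ^ 2 - u ^ 2) ^ k := by
    funext s
    simp only [F]
    exact tsum_congr fun k => by rw [hq, ← pow_mul]; ring
  have hFt : F lam c u t = ∑' k : ℕ, q ^ k / (Nat.factorial k : ℝ) ^ 2 * z ^ k := by
    have h := congrFun hFfun t
    rw [h, ← hzdef]
  -- derivatives
  have hw : ∀ s : ℝ, HasDerivAt (fun s : ℝ => c ^ 2 * s ^ 2 - u ^ 2) (2 * c ^ 2 * s) s := by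
    intro s
    have h := ((hasDerivAt_pow 2 s).const_mul (c ^ 2)).sub_const (u ^ 2)
    refine h.congr_deriv ?_
    push_cast
    ring
  have hDF : ∀ s : ℝ, HasDerivAt (fun s => F lam c u s)
      ((∑' k : ℕ, q ^ k / (Nat.factorial k : ℝ) ^ 2 * ((k : ℝ) * (c ^ 2 * s ^ 2 - u ^ 2) ^ (k - 1)))
        * (2 * c ^ 2 * s)) s := by
    intro s
    rw [hFfun]
    exact (hasDerivAt_G q (c ^ 2 * s ^ 2 - u ^ 2)).comp s (hw s)
  have hd1 : deriv (fun s => F lam c u s) t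
      = (∑' k : ℕ, q ^ k / (Nat.factorial k : ℝ) ^ 2 * ((k : ℝ) * z ^ (k - 1))) * (2 * c ^ 2 * t) := by
    have h := (hDF t).deriv
    rw [← hzdef] at h
    exact h
  have hd_fun : deriv (fun s => F lam c u s)
      = fun s : ℝ => (∑' k : ℕ, q ^ k / (Nat.factorial k : ℝ) ^ 2 *
          ((k : ℝ) * (c ^ 2 * s ^ 2 - u ^ 2) ^ (k - 1))) * (2 * c ^ 2 * s) :=
    funext fun s => (hDF s).deriv
  have hlin : HasDerivAt (fun s : ℝ => 2 * c ^ 2 * s) (2 * c ^ 2) t := by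
    simpa using (hasDerivAt_id t).const_mul (2 * c ^ 2)
  have hmul : HasDerivAt (fun s : ℝ => (∑' k : ℕ, q ^ k / (Nat.factorial k : ℝ) ^ 2 *
        ((k : ℝ) * (c ^ 2 * s ^ 2 - u ^ 2) ^ (k - 1))) * (2 * c ^ 2 * s))
      ((∑' k : ℕ, q ^ k / (Nat.factorial k : ℝ) ^ 2 *
          ((k : ℝ) * (((k - 1 : ℕ) : ℝ) * z ^ (k - 1 - 1)))) * (2 * c ^ 2 * t) * (2 * c ^ 2 * t)
        + (∑' k : ℕ, q ^ k / (Nat.factorial k : ℝ) ^ 2 * ((k : ℝ) * z ^ (k - 1))) * (2 * c ^ 2)) t := by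
    have h := HasDerivAt.mul ((hasDerivAt_G1 q (c ^ 2 * t ^ 2 - u ^ 2)).comp t (hw t)) hlin
    simp only [Function.comp] at h
    rw [← hzdef] at h
    exact h
  have hd2 : iteratedDeriv 2 (fun s => F lam c u s) t
      = (∑' k : ℕ, q ^ k / (Nat.factorial k : ℝ) ^ 2 *
          ((k : ℝ) * (((k - 1 : ℕ) : ℝ) * z ^ (k - 1 - 1)))) * (2 * c ^ 2 * t) * (2 * c ^ 2 * t)
        + (∑' k : ℕ, q ^ k / (Nat.factorial k : ℝ) ^ 2 * ((k : ℝ) * z ^ (k - 1))) * (2 * c ^ 2) := by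
    rw [iteratedDeriv_succ, iteratedDeriv_one, hd_fun]
    exact hmul.deriv
  -- summability of the three basic series
  have sum0 : Summable (fun k : ℕ => q ^ k / (Nat.factorial k : ℝ) ^ 2 * z ^ k) := by
    refine aux_summable 1 (|q| * (|z| + 1)) (by positivity) fun k => ?_
    have h : q ^ k / (Nat.factorial k : ℝ) ^ 2 * z ^ k
        = q ^ k / (Nat.factorial k : ℝ) ^ 2 * ((1:ℝ) * z ^ k) := by ring
    rw [h]
    refine aux_key q (|z| + 1) 1 z 1 k k le_rfl hRz zero_le_one ?_ habsz
    rw [abs_one]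
    nlinarith [Nat.cast_nonneg (α := ℝ) k]
  have sum1 : Summable (fun k : ℕ => q ^ k / (Nat.factorial k : ℝ) ^ 2 * ((k : ℝ) * z ^ (k - 1))) := by
    refine aux_summable 1 (|q| * (|z| + 1)) (by positivity) fun k => ?_
    refine aux_key q (|z| + 1) _ z 1 k (k - 1) (Nat.sub_le k 1) hRz zero_le_one ?_ habsz
    rw [Nat.abs_cast]
    nlinarith [Nat.cast_nonneg (α := ℝ) k]
  have sum2 : Summable (fun k : ℕ => q ^ k / (Nat.factorial k : ℝ) ^ 2 *
      ((k : ℝ) * (((k - 1 : ℕ) : ℝ) * z ^ (k - 1 - 1)))) := by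
    refine aux_summable 1 (|q| * (|z| + 1)) (by positivity) fun k => ?_
    have h : q ^ k / (Nat.factorial k : ℝ) ^ 2 * ((k : ℝ) * (((k - 1 : ℕ) : ℝ) * z ^ (k - 1 - 1)))
        = q ^ k / (Nat.factorial k : ℝ) ^ 2 * (((k : ℝ) * ((k - 1 : ℕ) : ℝ)) * z ^ (k - 1 - 1)) := by
      ring
    rw [h]
    refine aux_key q (|z| + 1) _ z 1 k (k - 1 - 1) ((Nat.sub_le _ _).trans (Nat.sub_le _ _)) hRz
      zero_le_one ?_ habsz
    rw [abs_mul, Nat.abs_cast, Nat.abs_cast]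
    have h1 : ((k - 1 : ℕ) : ℝ) ≤ (k : ℝ) := by exact_mod_cast Nat.sub_le k 1
    nlinarith [Nat.cast_nonneg (α := ℝ) k, Nat.cast_nonneg (α := ℝ) (k - 1)]
  -- shifted forms
  have sum1' : Summable (fun k : ℕ => q ^ (k + 1) / (Nat.factorial (k + 1) : ℝ) ^ 2
      * (((k : ℝ) + 1) * z ^ k)) := by
    refine ((summable_nat_add_iff 1).mpr sum1).congr fun k => ?_
    push_cast [Nat.add_sub_cancel]
    ring
  have hshift1 : (∑' k : ℕ, q ^ k / (Nat.factorial k : ℝ) ^ 2 * ((k : ℝ) * z ^ (k - 1)))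
      = ∑' k : ℕ, q ^ (k + 1) / (Nat.factorial (k + 1) : ℝ) ^ 2 * (((k : ℝ) + 1) * z ^ k) := by
    rw [sum1.tsum_eq_zero_add]
    simp only [Nat.cast_zero, zero_mul, mul_zero, zero_add]
    exact tsum_congr fun k => by
      push_cast [Nat.add_sub_cancel]
      ring
  have sum2' : Summable (fun k : ℕ => q ^ (k + 2) / (Nat.factorial (k + 2) : ℝ) ^ 2
      * (((k : ℝ) + 2) * (((k : ℝ) + 1) * z ^ k))) := by
    refine ((summable_nat_add_iff 2).mpr sum2).congr fun k => ?_
    push_cast [Nat.add_sub_cancel]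
    ring
  have hshift2 : (∑' k : ℕ, q ^ k / (Nat.factorial k : ℝ) ^ 2 *
        ((k : ℝ) * (((k - 1 : ℕ) : ℝ) * z ^ (k - 1 - 1))))
      = ∑' k : ℕ, q ^ (k + 2) / (Nat.factorial (k + 2) : ℝ) ^ 2
          * (((k : ℝ) + 2) * (((k : ℝ) + 1) * z ^ k)) := by
    rw [sum2.tsum_eq_zero_add, ((summable_nat_add_iff 1).mpr sum2).tsum_eq_zero_add]
    norm_num
    exact tsum_congr fun k => by
      push_cast [Nat.add_sub_cancel]
      ring
  have hs0 : HasSum (fun k : ℕ => q ^ k / (Nat.factorial k : ℝ) ^ 2 * z ^ k)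
      (∑' k : ℕ, q ^ k / (Nat.factorial k : ℝ) ^ 2 * z ^ k) := sum0.hasSum
  have hs1 : HasSum (fun k : ℕ => q ^ (k + 1) / (Nat.factorial (k + 1) : ℝ) ^ 2
      * (((k : ℝ) + 1) * z ^ k))
      (∑' k : ℕ, q ^ k / (Nat.factorial k : ℝ) ^ 2 * ((k : ℝ) * z ^ (k - 1))) := by
    rw [hshift1]
    exact sum1'.hasSum
  have hs2 : HasSum (fun k : ℕ => q ^ (k + 2) / (Nat.factorial (k + 2) : ℝ) ^ 2
      * (((k : ℝ) + 2) * (((k : ℝ) + 1) * z ^ k)))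
      (∑' k : ℕ, q ^ k / (Nat.factorial k : ℝ) ^ 2 *
        ((k : ℝ) * (((k - 1 : ℕ) : ℝ) * z ^ (k - 1 - 1)))) := by
    rw [hshift2]
    exact sum2'.hasSum
  have hBig : HasSum
      (fun k : ℕ => Real.exp (-(lam * t)) / c *
        (-(lam * (q ^ k / (Nat.factorial k : ℝ) ^ 2 * z ^ k))
          + q ^ (k + 1) / (Nat.factorial (k + 1) : ℝ) ^ 2 * (((k : ℝ) + 1) * z ^ k) * (2 * c ^ 2 * t)
          + 2 / lam * (q ^ (k + 2) / (Nat.factorial (k + 2) : ℝ) ^ 2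
              * (((k : ℝ) + 2) * (((k : ℝ) + 1) * z ^ k)) * (2 * c ^ 2 * t) * (2 * c ^ 2 * t)
            + q ^ (k + 1) / (Nat.factorial (k + 1) : ℝ) ^ 2 * (((k : ℝ) + 1) * z ^ k) * (2 * c ^ 2))))
      (Real.exp (-(lam * t)) / c *
        (-(lam * ∑' k : ℕ, q ^ k / (Nat.factorial k : ℝ) ^ 2 * z ^ k)
          + (∑' k : ℕ, q ^ k / (Nat.factorial k : ℝ) ^ 2 * ((k : ℝ) * z ^ (k - 1))) * (2 * c ^ 2 * t)
          + 2 / lam * ((∑' k : ℕ, q ^ k / (Nat.factorial k : ℝ) ^ 2 *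
                ((k : ℝ) * (((k - 1 : ℕ) : ℝ) * z ^ (k - 1 - 1)))) * (2 * c ^ 2 * t) * (2 * c ^ 2 * t)
            + (∑' k : ℕ, q ^ k / (Nat.factorial k : ℝ) ^ 2 * ((k : ℝ) * z ^ (k - 1))) * (2 * c ^ 2)))) :=
    (((hs0.mul_left lam).neg.add (hs1.mul_right (2 * c ^ 2 * t))).add
      ((((hs2.mul_right (2 * c ^ 2 * t)).mul_right (2 * c ^ 2 * t)).add
        (hs1.mul_right (2 * c ^ 2))).mul_left (2 / lam))).mul_left (Real.exp (-(lam * t)) / c)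
  -- the two target families
  obtain ⟨sa, hsa⟩ : ∃ f : ℕ → ℝ, f = fun k : ℕ =>
      2 * lam * c * t ^ 2 * Real.exp (-(lam * t)) *
        ((k : ℝ) / ((k : ℝ) + 1) * (q ^ k / (Nat.factorial k : ℝ) ^ 2) * z ^ (k - 1)) := ⟨_, rfl⟩
  obtain ⟨sb, hsb⟩ : ∃ f : ℕ → ℝ, f = fun k : ℕ =>
      Real.exp (-(lam * t)) / c * (q ^ k / (Nat.factorial k : ℝ) ^ 2) * z ^ k *
        (lam ^ 2 * t / (2 * ((k : ℝ) + 1)) - lam * (k : ℝ) / ((k : ℝ) + 1)) := ⟨_, rfl⟩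
  have sumsa : Summable sa := by
    rw [hsa]
    refine aux_summable (2 * lam * c * t ^ 2 * Real.exp (-(lam * t))) (|q| * (|z| + 1))
      (by positivity) fun k => ?_
    have h : 2 * lam * c * t ^ 2 * Real.exp (-(lam * t)) *
          ((k : ℝ) / ((k : ℝ) + 1) * (q ^ k / (Nat.factorial k : ℝ) ^ 2) * z ^ (k - 1))
        = q ^ k / (Nat.factorial k : ℝ) ^ 2 *
          ((2 * lam * c * t ^ 2 * Real.exp (-(lam * t)) * ((k : ℝ) / ((k : ℝ) + 1))) * z ^ (k - 1)) := by
      ring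
    rw [h]
    refine aux_key q (|z| + 1) _ z _ k (k - 1) (Nat.sub_le k 1) hRz (by positivity) ?_ habsz
    rw [abs_mul, abs_of_pos (by positivity : (0:ℝ) < 2 * lam * c * t ^ 2 * Real.exp (-(lam * t)))]
    have h1 : |(k : ℝ) / ((k : ℝ) + 1)| ≤ 1 := by
      rw [abs_div, Nat.abs_cast, abs_of_pos (by positivity : (0:ℝ) < (k : ℝ) + 1),
        div_le_one (by positivity)]
      linarith
    have h2 : (1:ℝ) ≤ ((k : ℝ) + 2) ^ 2 := by nlinarith [Nat.cast_nonneg (α := ℝ) k]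
    nlinarith [mul_le_mul_of_nonneg_left h1
      (by positivity : (0:ℝ) ≤ 2 * lam * c * t ^ 2 * Real.exp (-(lam * t))),
      mul_le_mul_of_nonneg_left h2
      (by positivity : (0:ℝ) ≤ 2 * lam * c * t ^ 2 * Real.exp (-(lam * t)))]
  have sumsb : Summable sb := by
    rw [hsb]
    refine aux_summable (Real.exp (-(lam * t)) / c * (lam ^ 2 * t / 2 + lam)) (|q| * (|z| + 1))
      (by positivity) fun k => ?_
    have h : Real.exp (-(lam * t)) / c * (q ^ k / (Nat.factorial k : ℝ) ^ 2) * z ^ k *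
          (lam ^ 2 * t / (2 * ((k : ℝ) + 1)) - lam * (k : ℝ) / ((k : ℝ) + 1))
        = q ^ k / (Nat.factorial k : ℝ) ^ 2 *
          ((Real.exp (-(lam * t)) / c *
            (lam ^ 2 * t / (2 * ((k : ℝ) + 1)) - lam * (k : ℝ) / ((k : ℝ) + 1))) * z ^ k) := by
      ring
    rw [h]
    refine aux_key q (|z| + 1) _ z _ k k le_rfl hRz (by positivity) ?_ habsz
    have hk1 : (0:ℝ) < (k : ℝ) + 1 := by positivity
    have e1 : lam ^ 2 * t / (2 * ((k : ℝ) + 1)) ≤ lam ^ 2 * t / 2 := by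
      rw [div_le_div_iff₀ (by positivity) (by norm_num)]
      nlinarith [mul_nonneg (mul_nonneg (sq_nonneg lam) ht.le) (Nat.cast_nonneg (α := ℝ) k)]
    have e2 : (0:ℝ) ≤ lam * (k : ℝ) / ((k : ℝ) + 1) := by positivity
    have e3 : lam * (k : ℝ) / ((k : ℝ) + 1) ≤ lam := by
      rw [div_le_iff₀ hk1]
      nlinarith [Nat.cast_nonneg (α := ℝ) k]
    have e4 : (0:ℝ) ≤ lam ^ 2 * t / (2 * ((k : ℝ) + 1)) := by positivity
    have habsW : |lam ^ 2 * t / (2 * ((k : ℝ) + 1)) - lam * (k : ℝ) / ((k : ℝ) + 1)|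
        ≤ lam ^ 2 * t / 2 + lam := by
      rw [abs_le]
      constructor
      · nlinarith [sq_nonneg lam]
      · nlinarith
    rw [abs_mul, abs_of_pos (by positivity : (0:ℝ) < Real.exp (-(lam * t)) / c)]
    have h2 : (1:ℝ) ≤ ((k : ℝ) + 2) ^ 2 := by nlinarith [Nat.cast_nonneg (α := ℝ) k]
    nlinarith [mul_le_mul_of_nonneg_left habsW
      (by positivity : (0:ℝ) ≤ Real.exp (-(lam * t)) / c),
      mul_le_mul_of_nonneg_left h2
      (by positivity : (0:ℝ) ≤ Real.exp (-(lam * t)) / c * (lam ^ 2 * t / 2 + lam))]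
  have sumsa' : Summable (fun k => sa (k + 1)) := (summable_nat_add_iff 1).mpr sumsa
  have hsa0 : sa 0 = 0 := by rw [hsa]; norm_num
  -- split identity for the right-hand side
  have hu2 : u ^ 2 = c ^ 2 * t ^ 2 - z := by rw [hzdef]; ring
  have hsplit : ∀ k : ℕ,
      lam / c * (Real.exp (-(lam * t)) / z) *
        ((lam / (2 * c)) ^ (2 * k) * z ^ k / ((Nat.factorial k : ℝ)) ^ 2 *
          ((c ^ 2 * t ^ 2 + u ^ 2) * (1 - 1 / ((k : ℝ) + 1)) +
            lam * t * z / (2 * ((k : ℝ) + 1))))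
      = sa k + sb k := by
    intro k
    simp only [hsa, hsb]
    rw [hu2, pow_mul, hq]
    rcases k with _ | n
    · norm_num
      field_simp
    · simp only [Nat.add_sub_cancel]
      have h1 : ((n : ℝ) + 1) ≠ 0 := by positivity
      have hfk : (Nat.factorial (n + 1) : ℝ) ≠ 0 := by
        exact_mod_cast (Nat.factorial_pos (n + 1)).ne'
      push_cast
      field_simp
      ring
  -- the key termwise identity
  have hbigident : ∀ k : ℕ,
      Real.exp (-(lam * t)) / c *
        (-(lam * (q ^ k / (Nat.factorial k : ℝ) ^ 2 * z ^ k))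
          + q ^ (k + 1) / (Nat.factorial (k + 1) : ℝ) ^ 2 * (((k : ℝ) + 1) * z ^ k) * (2 * c ^ 2 * t)
          + 2 / lam * (q ^ (k + 2) / (Nat.factorial (k + 2) : ℝ) ^ 2
              * (((k : ℝ) + 2) * (((k : ℝ) + 1) * z ^ k)) * (2 * c ^ 2 * t) * (2 * c ^ 2 * t)
            + q ^ (k + 1) / (Nat.factorial (k + 1) : ℝ) ^ 2 * (((k : ℝ) + 1) * z ^ k) * (2 * c ^ 2)))
      = sa (k + 1) + sb k := by
    intro k
    simp only [hsa, hsb, Nat.add_sub_cancel]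
    have hfk : (Nat.factorial k : ℝ) ≠ 0 := by exact_mod_cast (Nat.factorial_pos k).ne'
    have h1 : ((k : ℝ) + 1) ≠ 0 := by positivity
    have h2 : ((k : ℝ) + 2) ≠ 0 := by positivity
    simp only [Nat.factorial_succ]
    push_cast
    rw [hq]
    field_simp
    ring_nf
    field_simp
    ring
  -- right-hand side as a single series
  have hRight : lam / c * (Real.exp (-(lam * t)) / z) *
      (∑' k : ℕ, (lam / (2 * c)) ^ (2 * k) * z ^ k / ((Nat.factorial k : ℝ)) ^ 2 *
        ((c ^ 2 * t ^ 2 + u ^ 2) * (1 - 1 / ((k : ℝ) + 1)) +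
          lam * t * z / (2 * ((k : ℝ) + 1))))
      = ∑' k : ℕ, (sa (k + 1) + sb k) := by
    rw [← tsum_mul_left, tsum_congr hsplit, sumsa.tsum_add sumsb,
      sumsa.tsum_eq_zero_add, hsa0, zero_add, ← sumsa'.tsum_add sumsb]
  calc planarDensity lam c u t
      = Real.exp (-(lam * t)) / c *
        (-(lam * ∑' k : ℕ, q ^ k / (Nat.factorial k : ℝ) ^ 2 * z ^ k)
          + (∑' k : ℕ, q ^ k / (Nat.factorial k : ℝ) ^ 2 * ((k : ℝ) * z ^ (k - 1))) * (2 * c ^ 2 * t)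
          + 2 / lam * ((∑' k : ℕ, q ^ k / (Nat.factorial k : ℝ) ^ 2 *
                ((k : ℝ) * (((k - 1 : ℕ) : ℝ) * z ^ (k - 1 - 1)))) * (2 * c ^ 2 * t) * (2 * c ^ 2 * t)
            + (∑' k : ℕ, q ^ k / (Nat.factorial k : ℝ) ^ 2 * ((k : ℝ) * z ^ (k - 1))) * (2 * c ^ 2))) := by
        simp only [planarDensity]
        rw [hFt, hd1, hd2]
    _ = ∑' k : ℕ, (sa (k + 1) + sb k) := by
        rw [← hBig.tsum_eq]
        exact tsum_congr hbigident
    _ = lam / c * (Real.exp (-(lam * t)) / z) *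
        ∑' k : ℕ, (lam / (2 * c)) ^ (2 * k) * z ^ k / ((Nat.factorial k : ℝ)) ^ 2 *
          ((c ^ 2 * t ^ 2 + u ^ 2) * (1 - 1 / ((k : ℝ) + 1)) +
            lam * t * z / (2 * ((k : ℝ) + 1))) := hRight.symm
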